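/- Let d ≥ 1, λ₁ ≠ 0, and let f : ℝ^d → ℝ be integrable with respect to the standard Gaussian measure γ_d. Then for ω ∼ γ_d, E_ω[R₁(f, ω)] = ∫_{ℝ^d} f dγ_d; consequently, for i.i.d. ω₁, …, ω_D ∼ γ_d, the stochastic rule R̄₁(f) = (1/D) Σ_{i=1}^D R₁(f, ω_i) is an unbiased estimator of ∫_{ℝ^d} f dγ_d, i.e., E[R̄₁(f)] = ∫_{ℝ^d} f dγ_d. -/

import Mathlib

open MeasureTheory ProbabilityTheory Real
open scoped RealInnerProductSpace

/-- The standard Gaussian measure `N(0, I_d)` on `ℝ^d`,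
the `d`-fold product of the standard normal distribution. -/
noncomputable def stdGaussian (d : ℕ) : Measure (EuclideanSpace ℝ (Fin d)) :=
  (Measure.pi fun _ : Fin d => gaussianReal 0 1).map (MeasurableEquiv.toLp 2 (Fin d → ℝ))

/-- The third-degree fully symmetric interpolatory rule with generator `l ≠ 0`:
`Q^{(1,d)}(f) = (1 - d/l²)·f(0) + (1/(2l²))·∑ᵢ [f(l eᵢ) + f(-l eᵢ)]`. -/
noncomputable def Q1 (d : ℕ) (l : ℝ) (f : EuclideanSpace ℝ (Fin d) → ℝ) : ℝ :=
  (1 - d / l ^ 2) * f 0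
    + (1 / (2 * l ^ 2)) * ∑ i : Fin d,
        (f (EuclideanSpace.single i l) + f (-EuclideanSpace.single i l))

/-- The randomized third-degree rule `M^{(1,d)}(f, ω)` with random weights
`ã₀(ω) = 1 - (∑ᵢ ωᵢ²)/l²` and `ã₁(ω) = (∑ᵢ ωᵢ²)/(2dl²)`. -/
noncomputable def M1 (d : ℕ) (l : ℝ) (f : EuclideanSpace ℝ (Fin d) → ℝ)
    (ω : EuclideanSpace ℝ (Fin d)) : ℝ :=
  (1 - (∑ i, ω i ^ 2) / l ^ 2) * f 0
    + ((∑ i, ω i ^ 2) / (2 * d * l ^ 2)) * ∑ i : Fin d,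
        (f (EuclideanSpace.single i l) + f (-EuclideanSpace.single i l))

/-- The single-sample stochastic rule `R₁(f, ω) = Q^{(1,d)}(f) + f(ω) - M^{(1,d)}(f, ω)`. -/
noncomputable def R1 (d : ℕ) (l : ℝ) (f : EuclideanSpace ℝ (Fin d) → ℝ)
    (ω : EuclideanSpace ℝ (Fin d)) : ℝ :=
  Q1 d l f + f ω - M1 d l f ω

/-! ### Auxiliary lemmas -/

/-- The `ℝ≥0`-valued standard normal pdf. -/
noncomputable def nnPDF : ℝ → NNReal := fun x => (gaussianPDFReal 0 1 x).toNNReal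

lemma nnPDF_meas : Measurable nnPDF := (measurable_gaussianPDFReal 0 1).real_toNNReal

lemma gaussianReal_eq :
    gaussianReal 0 1 = (volume : Measure ℝ).withDensity (fun x => (nnPDF x : ENNReal)) := by
  rw [gaussianReal_of_var_ne_zero 0 one_ne_zero]
  rfl

lemma pdf_coe (x : ℝ) :
    (nnPDF x : ℝ) = (Real.sqrt (2 * π))⁻¹ * Real.exp (-(1/2) * x ^ 2) := by
  rw [nnPDF, Real.coe_toNNReal _ (gaussianPDFReal_nonneg 0 1 x), gaussianPDFReal]
  simp only [NNReal.coe_one, mul_one, sub_zero]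
  rw [show -x ^ 2 / (2:ℝ) = -(1/2) * x ^ 2 from by ring]

lemma integrable_sq_gauss : Integrable (fun x : ℝ => x ^ 2) (gaussianReal 0 1) := by
  rw [gaussianReal_eq]
  refine (integrable_withDensity_iff_integrable_smul (g := fun x : ℝ => x ^ 2) nnPDF_meas).2 ?_
  have : (fun x : ℝ => nnPDF x • x ^ 2)
      = fun x => (Real.sqrt (2 * π))⁻¹ * (x ^ 2 * Real.exp (-(1/2) * x ^ 2)) := by
    ext x; rw [NNReal.smul_def, smul_eq_mul, pdf_coe]; ring
  rw [this]
  have hint : Integrable (fun x : ℝ => x ^ 2 * Real.exp (-(1/2) * x ^ 2)) := by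
    have := integrable_rpow_mul_exp_neg_mul_sq (b := 1/2) (by norm_num) (s := 2) (by norm_num)
    simpa using this
  exact hint.const_mul _

lemma integral_sq_gauss : ∫ x, x ^ 2 ∂(gaussianReal 0 1) = 1 := by
  rw [gaussianReal_eq, integral_withDensity_eq_integral_smul nnPDF_meas]
  have : (fun x : ℝ => nnPDF x • x ^ 2)
      = fun x => (Real.sqrt (2 * π))⁻¹ * (x ^ 2 * Real.exp (-(1/2) * x ^ 2)) := by
    ext x; rw [NNReal.smul_def, smul_eq_mul, pdf_coe]; ring
  rw [this, integral_const_mul]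
  have key : ∫ x : ℝ, x ^ 2 * Real.exp (-(1/2) * x ^ 2) = Real.sqrt 2 * Real.sqrt π := by
    have h1 : (fun x : ℝ => x ^ 2 * Real.exp (-(1/2) * x ^ 2))
        = fun x : ℝ => |x| ^ 2 * Real.exp (-(1/2) * |x| ^ 2) := by
      ext x; rw [sq_abs]
    rw [h1, integral_comp_abs (f := fun x : ℝ => x ^ 2 * Real.exp (-(1/2) * x ^ 2))]
    have h2 : ∀ x ∈ Set.Ioi (0:ℝ), x ^ 2 * Real.exp (-(1/2) * x ^ 2)
        = x ^ (2:ℝ) * Real.exp (-(1/2) * x ^ (2:ℝ)) := by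
      intro x _; rw [← Real.rpow_natCast x 2]; norm_num
    rw [setIntegral_congr_fun measurableSet_Ioi h2,
      integral_rpow_mul_exp_neg_mul_rpow (by norm_num) (by norm_num) (by norm_num)]
    have hg : Real.Gamma ((2 + 1) / 2) = (1/2) * Real.sqrt π := by
      have : ((2:ℝ) + 1)/2 = 1/2 + 1 := by norm_num
      rw [this, Real.Gamma_add_one (by norm_num), Real.Gamma_one_half_eq]
    have hb : ((1:ℝ)/2) ^ (-((2:ℝ) + 1) / 2) = 2 * Real.sqrt 2 := by
      rw [show ((1:ℝ)/2) = (2:ℝ)⁻¹ by norm_num,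
        ← Real.rpow_neg_one (2:ℝ), ← Real.rpow_mul (by norm_num : (0:ℝ) ≤ 2),
        show (-1:ℝ) * (-((2:ℝ) + 1) / 2) = 1 + 1/2 from by norm_num,
        Real.rpow_add (by norm_num), Real.rpow_one, ← Real.sqrt_eq_rpow]
    rw [hg, hb]; ring
  rw [key, Real.sqrt_mul (by norm_num)]
  have h2 : Real.sqrt 2 * Real.sqrt π ≠ 0 := by positivity
  field_simp

lemma map_eval_pi {ι : Type*} [Fintype ι] [DecidableEq ι] {α : ι → Type*}
    [∀ i, MeasurableSpace (α i)] (μ : ∀ i, Measure (α i))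
    [∀ i, IsProbabilityMeasure (μ i)] (i : ι) :
    (Measure.pi μ).map (Function.eval i) = μ i := by
  ext s hs
  rw [Measure.map_apply (measurable_pi_apply i) hs, Set.eval_preimage, Measure.pi_pi,
    Finset.prod_eq_single i
      (fun j _ hj => by rw [Function.update_of_ne hj]; exact measure_univ)
      (by simp)]
  rw [Function.update_self]

lemma integral_eval_pi {ι : Type*} [Fintype ι] [DecidableEq ι] {α : ι → Type*}
    [∀ i, MeasurableSpace (α i)] (μ : ∀ i, Measure (α i))
    [∀ i, IsProbabilityMeasure (μ i)] (i : ι) (g : α i → ℝ)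
    (hg : AEStronglyMeasurable g (μ i)) :
    ∫ x, g (x i) ∂(Measure.pi μ) = ∫ y, g y ∂(μ i) := by
  rw [← map_eval_pi μ i] at hg ⊢
  rw [integral_map (measurable_pi_apply i).aemeasurable hg]

lemma integrable_eval_pi {ι : Type*} [Fintype ι] [DecidableEq ι] {α : ι → Type*}
    [∀ i, MeasurableSpace (α i)] (μ : ∀ i, Measure (α i))
    [∀ i, IsProbabilityMeasure (μ i)] (i : ι) (g : α i → ℝ)
    (hg : Integrable g (μ i)) :
    Integrable (fun x => g (x i)) (Measure.pi μ) := by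
  rw [← map_eval_pi μ i] at hg
  exact hg.comp_measurable (measurable_pi_apply i)

instance stdGaussian_isProb (d : ℕ) : IsProbabilityMeasure (stdGaussian d) := by
  unfold _root_.stdGaussian
  exact Measure.isProbabilityMeasure_map (MeasurableEquiv.toLp 2 (Fin d → ℝ)).measurable.aemeasurable

lemma R1_eq (d : ℕ) (hd : 1 ≤ d) (l : ℝ) (hl : l ≠ 0) (f : EuclideanSpace ℝ (Fin d) → ℝ)
    (ω : EuclideanSpace ℝ (Fin d)) :
    R1 d l f ω = f ω +
      ((∑ i : Fin d, (f (EuclideanSpace.single i l) + f (-EuclideanSpace.single i l)))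
          / (2 * d * l ^ 2) - f 0 / l ^ 2) * ((d : ℝ) - ∑ i, ω i ^ 2) := by
  have hd0 : (d : ℝ) ≠ 0 := Nat.cast_ne_zero.2 (by omega)
  simp only [R1, Q1, M1]
  field_simp
  ring

/-- `E_ω[R₁(f, ω)] = ∫ f dγ_d`, and the stochastic rule
`R̄₁(f) = (1/D) ∑ᵢ R₁(f, ωᵢ)` over i.i.d. samples `ω₁, …, ω_D ∼ γ_d` is an unbiased
estimator of `∫ f dγ_d`. -/
theorem R1_unbiased (d D : ℕ) (hd : 1 ≤ d) (hD : 1 ≤ D) (l : ℝ) (hl : l ≠ 0)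
    (f : EuclideanSpace ℝ (Fin d) → ℝ) (hf : Integrable f (stdGaussian d)) :
    (∫ ω, R1 d l f ω ∂(stdGaussian d) = ∫ ω, f ω ∂(stdGaussian d)) ∧
    (∫ ωs, (1 / D : ℝ) * ∑ i : Fin D, R1 d l f (ωs i)
        ∂(Measure.pi fun _ : Fin D => stdGaussian d)
      = ∫ ω, f ω ∂(stdGaussian d)) := by
  have hD0 : (D : ℝ) ≠ 0 := Nat.cast_ne_zero.2 (by omega)
  set c : ℝ := (∑ i : Fin d, (f (EuclideanSpace.single i l) + f (-EuclideanSpace.single i l)))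
      / (2 * d * l ^ 2) - f 0 / l ^ 2 with hc
  have hsq : ∀ i : Fin d,
      Integrable (fun ω : EuclideanSpace ℝ (Fin d) => ω i ^ 2) (stdGaussian d) := fun i =>
    (integrable_map_equiv (MeasurableEquiv.toLp 2 (Fin d → ℝ)) _).2
      (integrable_eval_pi (fun _ : Fin d => gaussianReal 0 1) i (fun x => x ^ 2) integrable_sq_gauss)
  have hS : Integrable (fun ω : EuclideanSpace ℝ (Fin d) => ∑ i, ω i ^ 2) (stdGaussian d) :=
    integrable_finset_sum _ (fun i _ => hsq i)
  have hSval : ∫ ω, (∑ i, ω i ^ 2) ∂(stdGaussian d) = d := by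
    rw [integral_finset_sum _ (fun i _ => hsq i)]
    have h1 : ∀ i : Fin d, ∫ ω, ω i ^ 2 ∂(stdGaussian d) = 1 := fun i =>
      (integral_map_equiv (μ := Measure.pi fun _ : Fin d => gaussianReal 0 1)
        (MeasurableEquiv.toLp 2 (Fin d → ℝ)) _).trans
      ((integral_eval_pi (fun _ : Fin d => gaussianReal 0 1) i (fun x => x ^ 2)
        integrable_sq_gauss.1).trans integral_sq_gauss)
    simp [h1]
  have hrest : Integrable
      (fun ω : EuclideanSpace ℝ (Fin d) => c * ((d : ℝ) - ∑ i, ω i ^ 2)) (stdGaussian d) :=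
    ((integrable_const _).sub hS).const_mul c
  have heq : (fun ω => R1 d l f ω)
      = fun ω : EuclideanSpace ℝ (Fin d) => f ω + c * ((d : ℝ) - ∑ i, ω i ^ 2) :=
    funext fun ω => R1_eq d hd l hl f ω
  have h1 : ∫ ω, R1 d l f ω ∂(stdGaussian d) = ∫ ω, f ω ∂(stdGaussian d) := by
    rw [heq, integral_add hf hrest, integral_const_mul,
      integral_sub (integrable_const _) hS, integral_const, hSval]
    simp
  refine ⟨h1, ?_⟩
  have hR1int : Integrable (fun ω => R1 d l f ω) (stdGaussian d) := by
    rw [heq]; exact hf.add hrest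
  have hterm : ∀ i : Fin D,
      Integrable (fun ωs : Fin D → EuclideanSpace ℝ (Fin d) => R1 d l f (ωs i))
        (Measure.pi fun _ : Fin D => stdGaussian d) := fun i =>
    integrable_eval_pi (fun _ : Fin D => stdGaussian d) i _ hR1int
  rw [integral_const_mul, integral_finset_sum _ (fun i _ => hterm i)]
  have h2 : ∀ i : Fin D,
      ∫ ωs, R1 d l f (ωs i) ∂(Measure.pi fun _ : Fin D => stdGaussian d)
        = ∫ ω, f ω ∂(stdGaussian d) := fun i =>
    (integral_eval_pi (fun _ : Fin D => stdGaussian d) i _ hR1int.1).trans h1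
  simp only [h2, Finset.sum_const, Finset.card_univ, Fintype.card_fin, nsmul_eq_mul]
  field_simp
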